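/- Let P be a fine, saturated, sharp monoid dual to a cone σ, and let E be an equivariant (i.e., P^gp-graded) locally free module over k[P] of finite rank. Then E splits equivariantly as a direct sum of rank-one graded free modules: there is a finite multiset u₁, …, u_r ∈ P^gp and an isomorphism of graded k[P]-modules E ≅ ⊕ᵢ x^{-uᵢ} k[P]. -/

import Mathlib

open AddMonoidAlgebra DirectSum

namespace Klyachko19

set_option linter.unusedSectionVars false
set_option maxHeartbeats 1000000
set_option synthInstance.maxHeartbeats 1000000

section Proj
variable {G : Type} [DecidableEq G] {E : Type} [AddCommGroup E]

lemma evalAMH_apply {β : G → Type} [∀ i, AddZeroClass (β i)] (δ : G) (v : Π₀ i, β i) :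
    DFinsupp.evalAddMonoidHom δ v = v δ := rfl

variable (ℰ : G → AddSubgroup E) (hint : DirectSum.IsInternal ℰ)

noncomputable def decompE : E ≃+ ⨁ g, ℰ g :=
  (AddEquiv.ofBijective (DirectSum.coeAddMonoidHom ℰ) hint).symm

noncomputable def projE (δ : G) : E →+ E :=
  ((ℰ δ).subtype.comp (DFinsupp.evalAddMonoidHom δ)).comp (decompE ℰ hint).toAddMonoidHom

lemma projE_mem (δ : G) (x : E) : projE ℰ hint δ x ∈ ℰ δ := by
  simp [projE]

lemma decompE_of {g : G} {x : E} (hx : x ∈ ℰ g) :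
    decompE ℰ hint x = DirectSum.of (fun i => ℰ i) g ⟨x, hx⟩ := by
  rw [decompE, AddEquiv.symm_apply_eq]
  exact (DirectSum.coeAddMonoidHom_of ℰ g ⟨x, hx⟩).symm

lemma projE_of {g : G} {x : E} (hx : x ∈ ℰ g) (δ : G) :
    projE ℰ hint δ x = if δ = g then x else 0 := by
  simp only [projE, AddMonoidHom.comp_apply, AddEquiv.toAddMonoidHom_eq_coe,
    AddMonoidHom.coe_coe, decompE_of ℰ hint hx, evalAMH_apply]
  split_ifs with h
  · subst h
    exact congrArg Subtype.val (DirectSum.of_eq_same (β := fun i => ℰ i) δ ⟨x, hx⟩)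
  · exact (congrArg Subtype.val
      (DirectSum.of_eq_of_ne (β := fun i => ℰ i) g δ ⟨x, hx⟩ h))

lemma projE_sum_support (x : E) :
    ∃ S : Finset G, (x = ∑ δ ∈ S, projE ℰ hint δ x) ∧ ∀ δ ∉ S, projE ℰ hint δ x = 0 := by
  classical
  refine ⟨(decompE ℰ hint x).support, ?_, ?_⟩
  · conv_lhs => rw [← (decompE ℰ hint).symm_apply_apply x]
    conv_lhs => rw [← DirectSum.sum_support_of (decompE ℰ hint x)]
    rw [map_sum]
    refine Finset.sum_congr rfl fun δ _ => ?_
    have h1 : (decompE ℰ hint).symm (DirectSum.of (fun i => ℰ i) δ (decompE ℰ hint x δ)) =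
        ↑(decompE ℰ hint x δ) := by
      rw [decompE, AddEquiv.symm_symm]
      exact DirectSum.coeAddMonoidHom_of ℰ δ _
    rw [h1]
    rfl
  · intro δ hδ
    have h0 := DFinsupp.notMem_support_iff.mp hδ
    show ((decompE ℰ hint x) δ : E) = 0
    rw [h0]; rfl


end Proj

section Trunc
variable {k : Type} [Field k] {G : Type} [AddCommGroup G] [DecidableEq G]
  {P : AddSubmonoid G}

noncomputable def truncR (P : AddSubmonoid G) (k : Type) [Field k] (q : G)
    (f : AddMonoidAlgebra k P) : AddMonoidAlgebra k P :=
  letI := Classical.dec (q ∈ P)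
  if h : q ∈ P then AddMonoidAlgebra.single ⟨q, h⟩ (f.coeff ⟨q, h⟩) else 0

lemma truncR_zero (q : G) : truncR P k q (0 : AddMonoidAlgebra k P) = 0 := by
  unfold truncR; split_ifs <;> simp [AddMonoidAlgebra.single_zero]

lemma truncR_add (q : G) (f g : AddMonoidAlgebra k P) :
    truncR P k q (f + g) = truncR P k q f + truncR P k q g := by
  unfold truncR; split_ifs with h
  · rw [AddMonoidAlgebra.coeff_add, Finsupp.add_apply]; exact AddMonoidAlgebra.single_add _ _ _
  · simp

lemma truncR_single (q : G) (p : P) (c : k) :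
    truncR P k q (AddMonoidAlgebra.single p c) =
      if (p : G) = q then AddMonoidAlgebra.single p c else 0 := by
  unfold truncR
  split_ifs with h h2 h2
  · have : p = ⟨q, h⟩ := Subtype.ext h2
    subst this; congr 1; rw [AddMonoidAlgebra.coeff_single]; exact Finsupp.single_eq_same
  · rw [AddMonoidAlgebra.coeff_single, Finsupp.single_eq_of_ne' fun he => h2 (congrArg Subtype.val he),
      AddMonoidAlgebra.single_zero]
  · exact absurd (h2 ▸ p.2) h
  · rfl

lemma truncR_truncR (q : G) (f : AddMonoidAlgebra k P) :
    truncR P k q (truncR P k q f) = truncR P k q f := by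
  unfold truncR
  split_ifs with h
  · congr 1; exact Finsupp.single_eq_same
  · rfl

lemma truncR_sum_support (f : AddMonoidAlgebra k P) :
    ∃ S : Finset G, (f = ∑ q ∈ S, truncR P k q f) ∧ ∀ q ∉ S, truncR P k q f = 0 := by
  classical
  refine ⟨f.coeff.support.image Subtype.val, ?_, ?_⟩
  · rw [Finset.sum_image (fun a _ b _ h => Subtype.coe_injective h)]
    have h1 : ∀ p ∈ f.coeff.support, truncR P k (Subtype.val p) f =
        AddMonoidAlgebra.single p (f.coeff p) := by
      intro p _
      rw [truncR, dif_pos p.2]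
    rw [Finset.sum_congr rfl h1]
    exact (AddMonoidAlgebra.sum_coeff_single f).symm.trans rfl
  · intro q hq
    rw [truncR]
    split_ifs with h
    · have : f.coeff ⟨q, h⟩ = 0 := by
        by_contra hne
        exact hq (Finset.mem_image.mpr ⟨⟨q, h⟩, Finsupp.mem_support_iff.mpr hne, rfl⟩)
      rw [this, AddMonoidAlgebra.single_zero]
    · rfl

-- L4
lemma truncR_mul_single
    (q : G) (b : AddMonoidAlgebra k P) (p : P) (c : k) :
    truncR P k q (b * AddMonoidAlgebra.single p c) =
      truncR P k (q - (p : G)) b * AddMonoidAlgebra.single p c := by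
  classical
  have hqq : q - (p : G) + (p : G) = q := by abel
  by_cases hs : q - (p : G) ∈ P
  · have hq : q ∈ P := by
      have := P.add_mem hs p.2
      rwa [hqq] at this
    rw [truncR, truncR, dif_pos hs, dif_pos hq, AddMonoidAlgebra.single_mul_single]
    have key : (b * AddMonoidAlgebra.single p c).coeff ⟨q, hq⟩ = b.coeff ⟨q - ↑p, hs⟩ * c := by
      apply AddMonoidAlgebra.coeff_mul_single_eq_coeff_mul
      intro a _
      constructor
      · intro ha
        have h2 : (a : G) + ↑p = q := by
          have := congrArg Subtype.val ha; simpa using this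
        apply Subtype.ext
        show (a : G) = q - ↑p
        rw [eq_sub_iff_add_eq]; exact h2
      · rintro rfl; apply Subtype.ext; exact hqq
    rw [key]
    congr 1
    apply Subtype.ext
    show q = (q - (p : G)) + ↑p
    exact hqq.symm
  · rw [truncR, truncR, dif_neg hs, zero_mul]
    split_ifs with hq
    · have key : (b * AddMonoidAlgebra.single p c).coeff ⟨q, hq⟩ = 0 := by
        rw [AddMonoidAlgebra.mul_apply]
        apply Finset.sum_eq_zero
        intro a _
        apply Finset.sum_eq_zero
        intro a2 _
        show (if a + a2 = ⟨q, hq⟩ then b.coeff a * (AddMonoidAlgebra.single p c).coeff a2 else 0) = 0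
        split_ifs with he
        · by_cases hc : a2 = p
          · subst hc
            exfalso
            apply hs
            have h2 : (a : G) + ↑a2 = q := by
              have := congrArg Subtype.val he; simpa using this
            have h3 : (a : G) = q - ↑a2 := by rw [eq_sub_iff_add_eq]; exact h2
            exact h3 ▸ a.2
          · rw [AddMonoidAlgebra.coeff_single, Finsupp.single_eq_of_ne' fun hh => hc hh.symm, mul_zero]
        · rfl
      rw [key, AddMonoidAlgebra.single_zero]
    · rfl


lemma truncR_mul_trunc (q q' : G) (b f : AddMonoidAlgebra k P) :
    truncR P k q (b * truncR P k q' f) = truncR P k (q - q') b * truncR P k q' f := by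
  classical
  by_cases h : q' ∈ P
  · have ht : truncR P k q' f = AddMonoidAlgebra.single ⟨q', h⟩ (f.coeff ⟨q', h⟩) := by
      rw [truncR, dif_pos h]
    rw [ht, truncR_mul_single]
  · have ht : truncR P k q' f = 0 := by rw [truncR, dif_neg h]
    rw [ht, mul_zero, truncR_zero, mul_zero]

lemma truncR_zero_deg (b : AddMonoidAlgebra k P) (hb : b.coeff (0 : ↥P) = 0) :
    truncR P k 0 b = 0 := by
  rw [truncR, dif_pos P.zero_mem]
  have h00 : (⟨(0 : G), P.zero_mem⟩ : ↥P) = 0 := rfl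
  rw [h00, hb, AddMonoidAlgebra.single_zero]

lemma exists_minimal_deg (hsharp : ∀ u ∈ P, -u ∈ P → u = 0) :
    ∀ (N : ℕ) (S : Finset G), S.card ≤ N → S.Nonempty →
      ∃ δ ∈ S, ∀ δ' ∈ S, δ - δ' ∈ P → δ = δ' := by
  intro N
  induction N with
  | zero =>
    intro S hc hne
    obtain ⟨x, hx⟩ := hne
    have : S = ∅ := Finset.card_eq_zero.mp (Nat.le_zero.mp hc)
    simp [this] at hx
  | succ N IH =>
    intro S hc hne
    classical
    obtain ⟨δ₀, hδ₀⟩ := hne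
    set T := S.filter (fun x => δ₀ - x ∈ P ∧ x ≠ δ₀) with hT
    by_cases hTne : T.Nonempty
    · have hsub : T ⊆ S := Finset.filter_subset _ _
      have hδ₀T : δ₀ ∉ T := by simp [hT]
      have hcard : T.card ≤ N := by
        have : T.card < S.card := Finset.card_lt_card ⟨hsub, fun hsupset => hδ₀T (hsupset hδ₀)⟩
        omega
      obtain ⟨δ, hδT, hmin⟩ := IH T hcard hTne
      have hδT' := Finset.mem_filter.mp hδT
      have hδS := hδT'.1
      have hδP := hδT'.2.1
      have hδne := hδT'.2.2
      refine ⟨δ, hδS, ?_⟩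
      intro δ' hδ' hP'
      by_cases hcase : δ' = δ₀
      · subst hcase
        have h0 := hsharp _ hδP (by rw [neg_sub]; exact hP')
        exact ((sub_eq_zero.mp h0).symm)
      · have hmem : δ₀ - δ' ∈ P := by
          have := P.add_mem hδP hP'
          rwa [sub_add_sub_cancel] at this
        exact hmin δ' (Finset.mem_filter.mpr ⟨hδ', hmem, hcase⟩) hP'
    · refine ⟨δ₀, hδ₀, ?_⟩
      intro δ' hδ' hP'
      by_contra hne'
      exact hTne ⟨δ', Finset.mem_filter.mpr ⟨hδ', hP', fun h => hne' h.symm⟩⟩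

end Trunc

section Main
variable {k : Type} [Field k] {G : Type} [AddCommGroup G] [DecidableEq G]
  {P : AddSubmonoid G}
  {E : Type} [AddCommGroup E] [Module (AddMonoidAlgebra k P) E]

noncomputable def totalMap {n : ℕ} (e : Fin n → E) :
    (Fin n → AddMonoidAlgebra k P) →ₗ[AddMonoidAlgebra k P] E where
  toFun f := ∑ i, f i • e i
  map_add' f g := by simp [add_smul, Finset.sum_add_distrib]
  map_smul' r f := by simp [Finset.smul_sum, mul_smul]

@[simp] lemma totalMap_apply {n : ℕ} (e : Fin n → E) (f : Fin n → AddMonoidAlgebra k P) :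
    totalMap e f = ∑ i, f i • e i := rfl

variable (ℰ : G → AddSubgroup E) (hint : DirectSum.IsInternal ℰ)

lemma smul_eq_sum_single (f : AddMonoidAlgebra k P) (x : E) :
    f • x = ∑ p ∈ f.coeff.support, (AddMonoidAlgebra.single p (f.coeff p) : AddMonoidAlgebra k P) • x := by
  rw [← Finset.sum_smul]
  congr 1
  exact (AddMonoidAlgebra.sum_coeff_single f).symm.trans rfl

-- L1
lemma projE_smul_homog (hcompat : ∀ (p : P) (c : k) (g : G), ∀ x ∈ ℰ g,
      (AddMonoidAlgebra.single p c : AddMonoidAlgebra k P) • x ∈ ℰ ((p : G) + g))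
    (f : AddMonoidAlgebra k P) {g : G} {x : E} (hx : x ∈ ℰ g) (δ : G) :
    projE ℰ hint δ (f • x) = truncR P k (δ - g) f • x := by
  classical
  rw [smul_eq_sum_single, map_sum]
  have hterm : ∀ p ∈ f.coeff.support, projE ℰ hint δ ((AddMonoidAlgebra.single p (f.coeff p) :
      AddMonoidAlgebra k P) • x) =
      if (p : G) = δ - g then (AddMonoidAlgebra.single p (f.coeff p) : AddMonoidAlgebra k P) • x
      else 0 := by
    intro p _
    rw [projE_of ℰ hint (hcompat p (f.coeff p) g x hx) δ]
    have hiff : (δ = (p : G) + g) ↔ ((p : G) = δ - g) := by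
      constructor
      · intro h; rw [h]; abel
      · intro h; rw [h]; abel
    rw [if_congr hiff rfl rfl]
  rw [Finset.sum_congr rfl hterm]
  by_cases h : δ - g ∈ P
  · have hcond : ∀ p : P, ((p : G) = δ - g) ↔ (p = ⟨δ - g, h⟩) :=
      fun p => ⟨fun hh => Subtype.ext hh, fun hh => congrArg Subtype.val hh⟩
    rw [Finset.sum_congr rfl (fun p _ => by rw [if_congr (hcond p) rfl rfl])]
    rw [Finset.sum_ite_eq' f.coeff.support ⟨δ - g, h⟩
      (fun p => (AddMonoidAlgebra.single p (f.coeff p) : AddMonoidAlgebra k P) • x)]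
    rw [truncR, dif_pos h]
    split_ifs with hmem
    · rfl
    · have : f.coeff ⟨δ - g, h⟩ = 0 := Finsupp.notMem_support_iff.mp hmem
      rw [this, AddMonoidAlgebra.single_zero, zero_smul]
  · rw [truncR, dif_neg h, zero_smul]
    apply Finset.sum_eq_zero
    intro p _
    rw [if_neg]
    intro hh
    exact h (hh ▸ p.2)

-- L2
include hint in
lemma relation_components (hcompat : ∀ (p : P) (c : k) (g : G), ∀ x ∈ ℰ g,
      (AddMonoidAlgebra.single p c : AddMonoidAlgebra k P) • x ∈ ℰ ((p : G) + g))
    {n : ℕ} (e : Fin n → E) (d : Fin n → G)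
    (he : ∀ i, e i ∈ ℰ (d i)) (f : Fin n → AddMonoidAlgebra k P)
    (hrel : ∑ i, f i • e i = 0) (δ : G) :
    ∑ i, truncR P k (δ - d i) (f i) • e i = 0 := by
  have := congrArg (projE ℰ hint δ) hrel
  rw [map_sum, map_zero] at this
  rw [← this]
  exact Finset.sum_congr rfl fun i _ =>
    (projE_smul_homog ℰ hint hcompat (f i) (he i) δ).symm

include hint in
lemma klyachko_indep
    (hsharp : ∀ u ∈ P, -u ∈ P → u = 0)
    (hcompat : ∀ (p : P) (c : k) (g : G), ∀ x ∈ ℰ g,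
      (AddMonoidAlgebra.single p c : AddMonoidAlgebra k P) • x ∈ ℰ ((p : G) + g))
    (hproj : Module.Projective (AddMonoidAlgebra k P) E)
    {n : ℕ} (e : Fin n → E) (d : Fin n → G) (he : ∀ i, e i ∈ ℰ (d i))
    (hspan : Submodule.span (AddMonoidAlgebra k P) (Set.range e) = ⊤)
    (hnot : ∀ i, e i ∉ Submodule.span (AddMonoidAlgebra k P) (e '' {j | j ≠ i})) :
    LinearIndependent (AddMonoidAlgebra k P) e := by
  classical
  haveI := hproj
  set φ := totalMap (k := k) (P := P) e with hφ
  -- φ sends the i-th standard basis vector to e i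
  have hsingle : ∀ i, φ (Pi.single i (1 : (AddMonoidAlgebra k P))) = e i := by
    intro i
    rw [hφ, totalMap_apply]
    rw [Finset.sum_eq_single i]
    · rw [Pi.single_eq_same, one_smul]
    · intro j _ hj
      rw [Pi.single_eq_of_ne hj, zero_smul]
    · intro h; exact absurd (Finset.mem_univ i) h
  have hsurj : Function.Surjective φ := by
    rw [← LinearMap.range_eq_top, eq_top_iff, ← hspan, Submodule.span_le]
    rintro x ⟨i, rfl⟩
    exact ⟨Pi.single i 1, hsingle i⟩
  obtain ⟨s, hs⟩ := Module.projective_lifting_property φ LinearMap.id hsurj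
  -- the "constant coefficient vanishes" lemma for all relations
  have hconst : ∀ f : Fin n → (AddMonoidAlgebra k P), (∑ j, f j • e j = 0) → ∀ i, (f i).coeff (0 : ↥P) = 0 := by
    intro f hf i
    by_contra hc
    have hg := relation_components ℰ hint hcompat e d he f hf (d i)
    set g : Fin n → (AddMonoidAlgebra k P) := fun j => truncR P k (d i - d j) (f j) with hgdef
    set c : k := (f i).coeff (0 : ↥P) with hcdef
    have hgi : g i = AddMonoidAlgebra.single (0 : ↥P) c := by
      rw [hgdef]
      show truncR P k (d i - d i) (f i) = _
      rw [sub_self]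
      rw [truncR, dif_pos P.zero_mem]
      have h00 : (⟨(0 : G), P.zero_mem⟩ : ↥P) = 0 := rfl
      rw [h00]
    have hsplit : g i • e i + ∑ j ∈ Finset.univ.erase i, g j • e j = 0 :=
      (Finset.add_sum_erase Finset.univ (fun j => g j • e j) (Finset.mem_univ i)).trans hg
    have hgie : g i • e i = -∑ j ∈ Finset.univ.erase i, g j • e j := by
      rw [eq_neg_iff_add_eq_zero]; exact hsplit
    have hei : e i = (AddMonoidAlgebra.single (0 : ↥P) c⁻¹ : (AddMonoidAlgebra k P)) • (g i • e i) := by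
      rw [hgi, smul_smul, AddMonoidAlgebra.single_mul_single, inv_mul_cancel₀ hc, add_zero]
      rw [← AddMonoidAlgebra.one_def, one_smul]
    apply hnot i
    rw [hei, hgie]
    apply Submodule.smul_mem
    apply Submodule.neg_mem
    apply Submodule.sum_mem
    intro j hj
    apply Submodule.smul_mem
    apply Submodule.subset_span
    exact ⟨j, (Finset.mem_erase.mp hj).1, rfl⟩
  -- kernel generators
  set kgen : Fin n → (Fin n → (AddMonoidAlgebra k P)) := fun i => Pi.single i (1 : (AddMonoidAlgebra k P)) - s (e i) with hkgen
  have hkrel : ∀ i, ∑ j, (kgen i) j • e j = 0 := by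
    intro i
    have h1 : φ (kgen i) = 0 := by
      rw [hkgen]
      simp only [map_sub, hsingle]
      have h2 : φ (s (e i)) = e i := LinearMap.congr_fun hs (e i)
      rw [h2, sub_self]
    rw [← totalMap_apply e (kgen i), ← hφ, h1]
  -- every relation is a combination of the kernel generators
  have hfk : ∀ f : Fin n → (AddMonoidAlgebra k P), (∑ j, f j • e j = 0) → f = ∑ i, f i • kgen i := by
    intro f hf
    have h1 : ∑ i, f i • (Pi.single i (1 : AddMonoidAlgebra k P) : Fin n → AddMonoidAlgebra k P) = f := by
      funext j
      rw [Finset.sum_apply]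
      rw [Finset.sum_eq_single j]
      · rw [Pi.smul_apply, Pi.single_eq_same, smul_eq_mul, mul_one]
      · intro i _ hij
        rw [Pi.smul_apply, Pi.single_eq_of_ne (Ne.symm hij), smul_eq_mul, mul_zero]
      · intro h; exact absurd (Finset.mem_univ j) h
    have h2 : ∑ i, f i • s (e i) = 0 := by
      have : ∑ i, f i • s (e i) = s (∑ i, f i • e i) := by
        rw [map_sum]
        exact Finset.sum_congr rfl fun i _ => (map_smul s (f i) (e i)).symm
      rw [this, hf, map_zero]
    calc f = ∑ i, f i • (Pi.single i (1 : AddMonoidAlgebra k P) : Fin n → AddMonoidAlgebra k P)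
          - ∑ i, f i • s (e i) := by
            rw [h1, h2, sub_zero]
      _ = ∑ i, f i • kgen i := by
            rw [← Finset.sum_sub_distrib]
            exact Finset.sum_congr rfl fun i _ => (smul_sub (f i) _ _).symm
  -- homogeneous truncations of the kernel generators
  choose Sk hSk1 hSk2 using fun (i j : Fin n) => truncR_sum_support (kgen i j)
  set T : Fin n → Finset G := fun i => Finset.univ.biUnion (fun j => (Sk i j).image (· + d j))
    with hTdef
  set κ : Fin n → G → (Fin n → (AddMonoidAlgebra k P)) := fun i δ j => truncR P k (δ - d j) (kgen i j) with hκdef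
  have hκsum : ∀ i, kgen i = ∑ δ ∈ T i, κ i δ := by
    intro i
    funext j
    rw [Finset.sum_apply]
    have himg : (Sk i j).image (· + d j) ⊆ T i := by
      have hTi : T i = Finset.univ.biUnion (fun j' => (Sk i j').image (· + d j')) := by
        rw [hTdef]
      rw [hTi]
      exact Finset.subset_biUnion_of_mem (fun j' => (Sk i j').image (· + d j'))
        (Finset.mem_univ j)
    have hvanish : ∀ δ ∈ T i, δ ∉ (Sk i j).image (· + d j) → κ i δ j = 0 := by
      intro δ _ hδ
      rw [hκdef]
      apply hSk2
      intro hmem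
      exact hδ (Finset.mem_image.mpr ⟨δ - d j, hmem, by abel⟩)
    rw [← Finset.sum_subset himg hvanish]
    rw [Finset.sum_image (by intro a _ b _ h; exact add_right_cancel h)]
    have : ∀ q ∈ Sk i j, κ i (q + d j) j = truncR P k q (kgen i j) := by
      intro q _
      rw [hκdef]
      show truncR P k (q + d j - d j) (kgen i j) = _
      rw [add_sub_cancel_right]
    rw [Finset.sum_congr rfl this]
    exact hSk1 i j
  have hκvanish : ∀ i δ, δ ∉ T i → κ i δ = 0 := by
    intro i δ hδ
    funext j
    rw [hκdef]
    show truncR P k (δ - d j) (kgen i j) = 0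
    apply hSk2
    intro hmem
    apply hδ
    apply Finset.mem_biUnion.mpr ⟨j, Finset.mem_univ j, ?_⟩
    exact Finset.mem_image.mpr ⟨δ - d j, hmem, by abel⟩
  -- each truncation of a kernel element is again a relation
  have hκrel : ∀ i δ, ∑ j, (κ i δ) j • e j = 0 := by
    intro i δ
    exact relation_components ℰ hint hcompat e d he (kgen i) (hkrel i) δ
  -- the Nakayama argument: all truncations vanish
  have hκzero : ∀ i δ, κ i δ = 0 := by
    by_contra hcon
    push_neg at hcon
    obtain ⟨i₁, δ₁, hκne⟩ := hcon
    set 𝒮 : Finset G := (Finset.univ.biUnion T).filter (fun δ => ∃ i, κ i δ ≠ 0) with h𝒮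
    have h𝒮mem : ∀ i δ, κ i δ ≠ 0 → δ ∈ 𝒮 := by
      intro i δ hne
      have hTi : δ ∈ T i := by
        by_contra hni
        exact hne (hκvanish i δ hni)
      exact Finset.mem_filter.mpr
        ⟨Finset.mem_biUnion.mpr ⟨i, Finset.mem_univ i, hTi⟩, ⟨i, hne⟩⟩
    have h𝒮ne : 𝒮.Nonempty := ⟨δ₁, h𝒮mem i₁ δ₁ hκne⟩
    obtain ⟨δS, hδS𝒮, hδSmin⟩ := exists_minimal_deg hsharp 𝒮.card 𝒮 le_rfl h𝒮ne
    obtain ⟨iS, hκS⟩ := (Finset.mem_filter.mp hδS𝒮).2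
    set κS : Fin n → (AddMonoidAlgebra k P) := κ iS δS with hκSdef
    -- κS is a relation, hence a combination of kernel generators
    have hκSrel : ∑ j, κS j • e j = 0 := hκrel iS δS
    have hκSker : κS = ∑ i, κS i • kgen i := hfk κS hκSrel
    have hκScoef : ∀ i, (κS i).coeff (0 : ↥P) = 0 := hconst κS hκSrel
    -- κS is its own truncation at degree δS
    have hκStr : ∀ j, κS j = truncR P k (δS - d j) (κS j) := by
      intro j
      rw [hκSdef]
      show κ iS δS j = truncR P k (δS - d j) (κ iS δS j)
      rw [hκdef]
      exact (truncR_truncR _ _).symm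
    -- expand and truncate
    have hexp : κS = ∑ i, ∑ δ ∈ T i, κS i • κ i δ := by
      conv_lhs => rw [hκSker]
      refine Finset.sum_congr rfl fun i _ => ?_
      rw [hκsum i, Finset.smul_sum]
    set Ht : (Fin n → AddMonoidAlgebra k P) →+ (Fin n → AddMonoidAlgebra k P) :=
      AddMonoidHom.mk' (fun f j => truncR P k (δS - d j) (f j))
        (fun a b => funext fun j => truncR_add _ _ _) with hHtdef
    have hHtapp : ∀ f : Fin n → AddMonoidAlgebra k P,
        Ht f = fun j => truncR P k (δS - d j) (f j) := fun _ => rfl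
    have h1 : Ht κS = κS := by
      rw [hHtapp]; funext j; exact (hκStr j).symm
    have h2 : ∀ (i : Fin n) (δ : G) (b : AddMonoidAlgebra k P),
        Ht (b • κ i δ) = truncR P k (δS - δ) b • κ i δ := by
      intro i δ b
      rw [hHtapp]
      funext j
      have hκj : κ i δ j = truncR P k (δ - d j) (kgen i j) := rfl
      show truncR P k (δS - d j) ((b • κ i δ) j) = (truncR P k (δS - δ) b • κ i δ) j
      rw [Pi.smul_apply, Pi.smul_apply, smul_eq_mul, smul_eq_mul, hκj,
        truncR_mul_trunc, sub_sub_sub_cancel_right]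
    have h3 : κS = ∑ i, ∑ δ ∈ T i, truncR P k (δS - δ) (κS i) • κ i δ := by
      conv_lhs => rw [← h1, hexp]
      rw [map_sum]
      refine Finset.sum_congr rfl fun i _ => ?_
      rw [map_sum]
      exact Finset.sum_congr rfl fun δ _ => h2 i δ (κS i)
    have h4 : κS = 0 := by
      rw [h3]
      apply Finset.sum_eq_zero; intro i _
      apply Finset.sum_eq_zero; intro δ _
      by_cases hz : κ i δ = 0
      · rw [hz, smul_zero]
      · by_cases hPmem : δS - δ ∈ P
        · have heq : δS = δ := hδSmin δ (h𝒮mem i δ hz) hPmem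
          rw [heq, sub_self, truncR_zero_deg _ (hκScoef i), zero_smul]
        · rw [truncR, dif_neg hPmem, zero_smul]
    exact hκS h4
  -- conclude linear independence
  rw [Fintype.linearIndependent_iff]
  intro f hf i
  have h0 : f = ∑ i, f i • kgen i := hfk f hf
  have h1 : ∀ i, kgen i = 0 := by
    intro i
    rw [hκsum i]
    apply Finset.sum_eq_zero
    intro δ _
    exact hκzero i δ
  rw [h0]
  rw [Finset.sum_congr rfl (fun j _ => by rw [h1 j, smul_zero])]
  rw [Finset.sum_const_zero]
  rfl

include hint in
lemma klyachko_main
    (hsharp : ∀ u ∈ P, -u ∈ P → u = 0)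
    (hcompat : ∀ (p : P) (c : k) (g : G), ∀ x ∈ ℰ g,
      (AddMonoidAlgebra.single p c : AddMonoidAlgebra k P) • x ∈ ℰ ((p : G) + g))
    (hproj : Module.Projective (AddMonoidAlgebra k P) E) :
    ∀ (n : ℕ) (e : Fin n → E) (d : Fin n → G), (∀ i, e i ∈ ℰ (d i)) →
      Submodule.span (AddMonoidAlgebra k P) (Set.range e) = ⊤ →
      ∃ (r : ℕ) (u : Fin r → G) (b : Module.Basis (Fin r) (AddMonoidAlgebra k P) E),
        ∀ i, b i ∈ ℰ (u i) := by
  intro n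
  induction n with
  | zero =>
    intro e d he hspan
    have hzero : ∀ x : E, x = 0 := by
      intro x
      have hx : x ∈ (⊤ : Submodule (AddMonoidAlgebra k P) E) := trivial
      rw [← hspan, Set.range_eq_empty, Submodule.span_empty, Submodule.mem_bot] at hx
      exact hx
    have hsub : Subsingleton E := ⟨fun a b => by rw [hzero a, hzero b]⟩
    exact ⟨0, Fin.elim0, Module.Basis.empty E, fun i => i.elim0⟩
  | succ n IH =>
    intro e d he hspan
    by_cases hA : ∃ i, e i ∈ Submodule.span (AddMonoidAlgebra k P) (e '' {j | j ≠ i})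
    · obtain ⟨i, hi⟩ := hA
      set e' := fun j : Fin n => e (i.succAbove j) with he'def
      set d' := fun j : Fin n => d (i.succAbove j) with hd'def
      have hrange : e '' {j | j ≠ i} = Set.range e' := by
        ext x
        constructor
        · rintro ⟨j, hj, rfl⟩
          obtain ⟨j', rfl⟩ := Fin.exists_succAbove_eq hj
          exact ⟨j', rfl⟩
        · rintro ⟨j', rfl⟩
          exact ⟨i.succAbove j', Fin.succAbove_ne i j', rfl⟩
      rw [hrange] at hi
      have hspan' : Submodule.span (AddMonoidAlgebra k P) (Set.range e') = ⊤ := by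
        rw [eq_top_iff, ← hspan, Submodule.span_le]
        rintro x ⟨j, rfl⟩
        by_cases hj : j = i
        · subst hj; exact hi
        · apply Submodule.subset_span
          obtain ⟨j', rfl⟩ := Fin.exists_succAbove_eq hj
          exact ⟨j', rfl⟩
      exact IH e' d' (fun j => he _) hspan'
    · push_neg at hA
      have hind := klyachko_indep ℰ hint hsharp hcompat hproj e d he hspan hA
      refine ⟨n + 1, d, Module.Basis.mk hind hspan.ge, ?_⟩
      intro i
      rw [Module.Basis.mk_apply]
      exact he i

end Main

end Klyachko19


/-- Klyachko's splitting theorem, affine case: Let `P` be a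
fine, saturated, sharp monoid (a finitely generated submonoid with trivial
units of its Grothendieck group `G = P^gp`), `k` a field, and `E` a
`P^gp`-graded module over the monoid algebra `k[P]` (the grading is given by a
family `ℰ : G → AddSubgroup E` which is an internal direct sum decomposition
and satisfies `single p c • ℰ g ⊆ ℰ (p + g)`).  If `E` is locally free of
finite rank (projective and finite over `k[P]`), then `E` splits equivariantly
as a direct sum of rank-one graded free modules: there is a finite multiset
`u₁, …, u_r ∈ P^gp` and a `k[P]`-basis of `E` consisting of homogeneous
elements of degrees `u₁, …, u_r` — i.e. a graded isomorphism
`E ≅ ⊕ᵢ x^{-uᵢ} k[P]`. -/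
theorem stmt_19 {k : Type} [Field k] {G : Type} [AddCommGroup G] [DecidableEq G]
    (P : AddSubmonoid G) (hPfg : P.FG)
    (hsharp : ∀ u ∈ P, -u ∈ P → u = 0)
    (hsat : ∀ (n : ℕ) (x : G), 1 ≤ n → n • x ∈ P → x ∈ P)
    (hGgen : ∀ x : G, ∃ a ∈ P, ∃ b ∈ P, x = a - b)
    {E : Type} [AddCommGroup E] [Module (AddMonoidAlgebra k P) E]
    (ℰ : G → AddSubgroup E)
    (hinternal : DirectSum.IsInternal ℰ)
    (hcompat : ∀ (p : P) (c : k) (g : G), ∀ x ∈ ℰ g,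
      (AddMonoidAlgebra.single p c : AddMonoidAlgebra k P) • x ∈ ℰ ((p : G) + g))
    (hproj : Module.Projective (AddMonoidAlgebra k P) E)
    (hfin : Module.Finite (AddMonoidAlgebra k P) E) :
    ∃ (r : ℕ) (u : Fin r → G) (b : Module.Basis (Fin r) (AddMonoidAlgebra k P) E),
      ∀ i, b i ∈ ℰ (u i) := by
  classical
  open Klyachko19 in
  obtain ⟨s0, hs0⟩ := hfin.fg_top
  set v : Fin s0.card → E := fun i => ((s0.equivFin.symm i : s0) : E) with hvdef
  have hv : ∀ x ∈ s0, ∃ j, v j = x := by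
    intro x hx
    refine ⟨s0.equivFin ⟨x, hx⟩, ?_⟩
    rw [hvdef]
    simp
  choose Sv hSv1 hSv2 using fun j => Klyachko19.projE_sum_support ℰ hinternal (v j)
  set SG : Finset G := Finset.univ.biUnion Sv with hSGdef
  set ι := Fin s0.card × {δ : G // δ ∈ SG} with hιdef
  set ε : Fin (Fintype.card ι) ≃ ι := (Fintype.equivFin ι).symm with hεdef
  set e : Fin (Fintype.card ι) → E :=
    fun x => Klyachko19.projE ℰ hinternal ((ε x).2 : G) (v (ε x).1) with hedef
  set d : Fin (Fintype.card ι) → G := fun x => ((ε x).2 : G) with hddef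
  have he : ∀ x, e x ∈ ℰ (d x) := fun x => Klyachko19.projE_mem ℰ hinternal _ _
  have hspan : Submodule.span (AddMonoidAlgebra k P) (Set.range e) = ⊤ := by
    rw [eq_top_iff, ← hs0, Submodule.span_le]
    intro x hx
    obtain ⟨j, rfl⟩ := hv x hx
    have hsum : v j = ∑ δ ∈ SG, Klyachko19.projE ℰ hinternal δ (v j) := by
      rw [← Finset.sum_subset (Finset.subset_biUnion_of_mem Sv (Finset.mem_univ j))
        (fun δ _ hδ => hSv2 j δ hδ)]
      exact hSv1 j
    rw [hsum]
    apply Submodule.sum_mem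
    intro δ hδ
    apply Submodule.subset_span
    refine ⟨ε.symm (j, ⟨δ, hδ⟩), ?_⟩
    have hee : ε (ε.symm (j, ⟨δ, hδ⟩)) = (j, ⟨δ, hδ⟩) := Equiv.apply_symm_apply ε _
    show Klyachko19.projE ℰ hinternal ((ε (ε.symm (j, ⟨δ, hδ⟩))).2 : G)
      (v ((ε (ε.symm (j, ⟨δ, hδ⟩))).1)) = Klyachko19.projE ℰ hinternal δ (v j)
    rw [hee]
  exact Klyachko19.klyachko_main ℰ hinternal hsharp hcompat hproj _ e d he hspan
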